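/- Let p be a prime with p > 3 and let H be a subgroup of GL₂(ℤ/p²ℤ) such that φ(H) is exactly the set of elements of GL₂(ℤ/pℤ) of determinant 1. Then either H is exactly the set of elements of GL₂(ℤ/p²ℤ) of determinant 1, or H is exactly the set of elements g ∈ GL₂(ℤ/p²ℤ) with det(φ(g)) = 1 (i.e. H = φ⁻¹(SL₂(ℤ/pℤ))). -/

import Mathlib

open Matrix

/-- `GL₂(ℤ/nℤ)`. -/
abbrev GL2 (n : ℕ) : Type := GL (Fin 2) (ZMod n)

/-- Reduction modulo `p` from `ℤ/p²ℤ` to `ℤ/pℤ`. -/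
def red (p : ℕ) : ZMod (p^2) →+* ZMod p :=
  ZMod.castHom (dvd_pow_self p (by norm_num)) (ZMod p)

/-- The natural homomorphism `φ : GL₂(ℤ/p²ℤ) →* GL₂(ℤ/pℤ)` given by entrywise
reduction modulo `p`. -/
def phi (p : ℕ) : GL2 (p^2) →* GL2 p :=
  Matrix.GeneralLinearGroup.map (red p)

/-- The element `1 + p • A` of `GL₂(ℤ/p²ℤ)` (its inverse is `1 - p • A`). -/
def kerUnit {p : ℕ} (A : Matrix (Fin 2) (Fin 2) (ZMod (p^2))) : GL2 (p^2) where
  val := 1 + (p : ZMod (p^2)) • A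
  inv := 1 - (p : ZMod (p^2)) • A
  val_inv := by
    have h : ((p : ZMod (p^2)) • A) * ((p : ZMod (p^2)) • A) = 0 := by
      rw [smul_mul_assoc, mul_smul_comm, smul_smul, ← Nat.cast_mul, ← pow_two,
        ZMod.natCast_self, zero_smul]
    rw [add_mul, one_mul, mul_sub, mul_one, h, sub_zero]
    abel
  inv_val := by
    have h : ((p : ZMod (p^2)) • A) * ((p : ZMod (p^2)) • A) = 0 := by
      rw [smul_mul_assoc, mul_smul_comm, smul_smul, ← Nat.cast_mul, ← pow_two,
        ZMod.natCast_self, zero_smul]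
    rw [sub_mul, one_mul, mul_add, mul_one, h, add_zero]
    abel

/-- The antidiagonal swap matrix `!![0,1;1,0]` as an element of `GL₂(ℤ/p²ℤ)`. -/
def swapGL (p : ℕ) : GL2 (p^2) where
  val := !![0, 1; 1, 0]
  inv := !![0, 1; 1, 0]
  val_inv := by
    ext i j
    fin_cases i <;> fin_cases j <;>
      simp [Matrix.mul_apply, Fin.sum_univ_succ, Matrix.one_apply]
  inv_val := by
    ext i j
    fin_cases i <;> fin_cases j <;>
      simp [Matrix.mul_apply, Fin.sum_univ_succ, Matrix.one_apply]

/-- Subgroups `H₁` and `H₂` of a group `G` are locally conjugate in `G` if there is a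
bijection `f : H₁ → H₂` such that `h` and `f h` are conjugate in `G` for every `h ∈ H₁`. -/
def IsLocallyConjugate {G : Type*} [Group G] (H₁ H₂ : Subgroup G) : Prop :=
  ∃ f : H₁ ≃ H₂, ∀ h : H₁, IsConj (h : G) ((f h : G))

/-- Subgroups `H₁` and `H₂` of `G` are conjugate in `G`: `g H₁ g⁻¹ = H₂` for some `g`. -/
def IsConjugateSubgroup {G : Type*} [Group G] (H₁ H₂ : Subgroup G) : Prop :=
  ∃ g : G, Subgroup.map (MulAut.conj g).toMonoidHom H₁ = H₂

/-- Nontrivially locally conjugate: locally conjugate but not conjugate. -/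
def IsNontriviallyLocallyConjugate {G : Type*} [Group G] (H₁ H₂ : Subgroup G) : Prop :=
  IsLocallyConjugate H₁ H₂ ∧ ¬ IsConjugateSubgroup H₁ H₂

set_option linter.unusedSectionVars false
set_option maxHeartbeats 1000000
section aux
section basic
variable {p : ℕ} [Fact p.Prime]

instance : NeZero (p^2) := ⟨pow_ne_zero 2 (Fact.out (p := p.Prime)).ne_zero⟩

lemma pp_zero : (p : ZMod (p^2)) * (p : ZMod (p^2)) = 0 := by
  rw [← Nat.cast_mul, ← pow_two, ZMod.natCast_self]

lemma exists_lift (x : ZMod (p^2)) (hx : red p x = 0) : ∃ y, x = (p : ZMod (p^2)) * y := by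
  obtain ⟨n, rfl⟩ : ∃ n : ℕ, x = (n : ZMod (p^2)) := ⟨x.val, (ZMod.natCast_zmod_val x).symm⟩
  rw [map_natCast, ZMod.natCast_eq_zero_iff] at hx
  obtain ⟨m, rfl⟩ := hx
  exact ⟨(m : ZMod (p^2)), by push_cast; ring⟩

lemma red_p_mul (x : ZMod (p^2)) : red p ((p : ZMod (p^2)) * x) = 0 := by
  obtain ⟨n, rfl⟩ : ∃ n : ℕ, x = (n : ZMod (p^2)) := ⟨x.val, (ZMod.natCast_zmod_val x).symm⟩
  rw [← Nat.cast_mul, map_natCast, ZMod.natCast_eq_zero_iff]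
  exact Dvd.intro n rfl

lemma pmul_eq_of_red_eq {x y : ZMod (p^2)} (h : red p x = red p y) :
    (p : ZMod (p^2)) * x = (p : ZMod (p^2)) * y := by
  obtain ⟨z, hz⟩ := exists_lift (x - y) (by rw [map_sub, h, sub_self])
  have := congrArg (fun t => (p : ZMod (p^2)) * t) hz
  simp only [mul_sub, ← mul_assoc, pp_zero, zero_mul] at this
  exact sub_eq_zero.mp this

lemma exists_matrix_lift (M : Matrix (Fin 2) (Fin 2) (ZMod (p^2)))
    (h : M.map (red p) = 0) : ∃ E, M = (p : ZMod (p^2)) • E := by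
  have h' : ∀ i j, ∃ y, M i j = (p : ZMod (p^2)) * y := by
    intro i j
    refine exists_lift _ ?_
    have := congrFun (congrFun h i) j
    simpa [Matrix.map_apply] using this
  choose E hE using h'
  exact ⟨Matrix.of E, by ext i j; simpa [Matrix.smul_apply] using hE i j⟩

-- kerUnit lemmas
lemma kerUnit_val (A : Matrix (Fin 2) (Fin 2) (ZMod (p^2))) :
    (kerUnit A : Matrix (Fin 2) (Fin 2) (ZMod (p^2))) = 1 + (p : ZMod (p^2)) • A := rfl

lemma smul_mul_smul_zero (A B : Matrix (Fin 2) (Fin 2) (ZMod (p^2))) :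
    ((p : ZMod (p^2)) • A) * ((p : ZMod (p^2)) • B) = 0 := by
  rw [smul_mul_assoc, mul_smul_comm, smul_smul, pp_zero, zero_smul]

lemma kerUnit_mul (A B : Matrix (Fin 2) (Fin 2) (ZMod (p^2))) :
    kerUnit A * kerUnit B = kerUnit (A + B) := by
  apply Units.ext
  show (1 + (p : ZMod (p^2)) • A) * (1 + (p : ZMod (p^2)) • B) = 1 + (p : ZMod (p^2)) • (A + B)
  rw [add_mul, one_mul, mul_add, mul_one, smul_mul_smul_zero, smul_add]
  abel

lemma kerUnit_zero : (kerUnit 0 : GL2 (p^2)) = 1 := by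
  apply Units.ext
  show (1 : Matrix (Fin 2) (Fin 2) (ZMod (p^2))) + (p : ZMod (p^2)) • 0 = 1
  simp

lemma kerUnit_pow (A : Matrix (Fin 2) (Fin 2) (ZMod (p^2))) (n : ℕ) :
    kerUnit A ^ n = kerUnit (n • A) := by
  induction n with
  | zero => rw [pow_zero, zero_smul, kerUnit_zero]
  | succ n ih =>
      have h1 : kerUnit A ^ (n+1) = kerUnit A ^ n * kerUnit A := pow_succ _ _
      rw [h1, ih, kerUnit_mul]
      congr 1
      exact (succ_nsmul A n).symm

lemma kerUnit_congr {A B : Matrix (Fin 2) (Fin 2) (ZMod (p^2))}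
    (h : A.map (red p) = B.map (red p)) : kerUnit A = kerUnit B := by
  apply Units.ext
  show (1 : Matrix _ _ _) + (p : ZMod (p^2)) • A = 1 + (p : ZMod (p^2)) • B
  congr 1
  ext i j
  exact pmul_eq_of_red_eq (by have := congrFun (congrFun h i) j; simpa [Matrix.map_apply] using this)

lemma phi_coe (g : GL2 (p^2)) :
    (phi p g : Matrix (Fin 2) (Fin 2) (ZMod p)) = (g : Matrix (Fin 2) (Fin 2) (ZMod (p^2))).map (red p) := rfl

lemma phi_kerUnit (A : Matrix (Fin 2) (Fin 2) (ZMod (p^2))) : phi p (kerUnit A) = 1 := by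
  apply Units.ext
  rw [phi_coe, Units.val_one, kerUnit_val]
  ext i j
  simp only [Matrix.map_apply, Matrix.add_apply, Matrix.smul_apply, map_add, smul_eq_mul,
    red_p_mul, add_zero]
  rcases eq_or_ne i j with rfl | hij
  · simp [Matrix.one_apply]
  · simp [Matrix.one_apply, hij]

lemma mem_ker_iff {g : GL2 (p^2)} (hg : phi p g = 1) : ∃ A, g = kerUnit A := by
  have h1 : ((g : Matrix (Fin 2) (Fin 2) (ZMod (p^2))) - 1).map (red p) = 0 := by
    have : (g : Matrix (Fin 2) (Fin 2) (ZMod (p^2))).map (red p) = 1 := by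
      rw [← phi_coe, hg]; rfl
    ext i j
    have h2 := congrFun (congrFun this i) j
    simp only [Matrix.map_apply] at h2
    simp only [Matrix.map_apply, Matrix.sub_apply, map_sub, Matrix.zero_apply, h2]
    rcases eq_or_ne i j with rfl | hij
    · simp [Matrix.one_apply_eq]
    · simp [Matrix.one_apply_ne hij]
  obtain ⟨E, hE⟩ := exists_matrix_lift _ h1
  exact ⟨E, Units.ext (by show _ = 1 + (p:ZMod (p^2)) • E; rw [← hE]; abel)⟩

lemma det_kerUnit (A : Matrix (Fin 2) (Fin 2) (ZMod (p^2))) :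
    (kerUnit A : Matrix (Fin 2) (Fin 2) (ZMod (p^2))).det = 1 + (p : ZMod (p^2)) * A.trace := by
  rw [kerUnit_val, Matrix.det_fin_two, Matrix.trace_fin_two]
  simp only [Matrix.add_apply, Matrix.smul_apply, Matrix.one_apply, smul_eq_mul]
  norm_num
  linear_combination (A 0 0 * A 1 1 - A 0 1 * A 1 0) * pp_zero (p := p)

lemma natCast_matrix (n : ℕ) :
    ((n : ℕ) : Matrix (Fin 2) (Fin 2) (ZMod (p^2))) = (n : ZMod (p^2)) • (1 : Matrix (Fin 2) (Fin 2) (ZMod (p^2))) := by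
  rw [Matrix.smul_one_eq_diagonal]
  exact (Matrix.diagonal_natCast n).symm

lemma pow_p (hp3 : 3 < p) (M E : Matrix (Fin 2) (Fin 2) (ZMod (p^2)))
    (hME : M * M = (p : ZMod (p^2)) • E) :
    (1 + M)^p = 1 + (p : ZMod (p^2)) • M := by
  have hexp := (Commute.one_right M).add_pow p
  rw [add_comm 1 M, hexp]
  have hzero : ∀ m ∈ Finset.range (p+1), M ^ m * 1 ^ (p - m) * (↑(p.choose m) : Matrix (Fin 2) (Fin 2) (ZMod (p^2))) =
      (if m = 0 then (1 : Matrix (Fin 2) (Fin 2) (ZMod (p^2))) else 0) +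
      (if m = 1 then (p : ZMod (p^2)) • M else 0) := by
    intro m hm
    rw [Finset.mem_range] at hm
    rcases eq_or_ne m 0 with rfl | h0
    · simp
    rcases eq_or_ne m 1 with rfl | h1
    · simp [natCast_matrix, mul_smul_comm]
    rw [if_neg h0, if_neg h1, add_zero]
    have hm2 : 2 ≤ m := by omega
    rcases lt_or_eq_of_le (Nat.lt_succ_iff.mp hm) with hlt | heq
    · -- 2 ≤ m < p : p divides choose
      obtain ⟨c, hc⟩ := (Fact.out (p := p.Prime)).dvd_choose_self h0 hlt
      have hMm : M ^ m = ((p : ZMod (p^2)) • E) * M ^ (m - 2) := by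
        rw [← hME, ← pow_two, ← pow_add]
        congr 1
        omega
      rw [hMm, hc, one_pow, mul_one, natCast_matrix]
      push_cast
      rw [smul_mul_assoc, mul_smul_comm, ← smul_mul_assoc, mul_one, smul_smul,
        show ((p : ZMod (p^2)) * (c : ZMod (p^2))) * (p : ZMod (p^2)) = 0 from by
          rw [mul_comm, ← mul_assoc, pp_zero, zero_mul],
        zero_smul]
    · -- m = p
      have hMm : M ^ m = ((p : ZMod (p^2)) • E) * ((p : ZMod (p^2)) • E) * M ^ (m - 4) := by
        rw [← hME, show M * M = M^2 from (pow_two M).symm, ← pow_add, ← pow_add]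
        congr 1
        omega
      rw [hMm, smul_mul_smul_zero, zero_mul, zero_mul, zero_mul]
  rw [Finset.sum_congr rfl hzero, Finset.sum_add_distrib,
    Finset.sum_ite_eq' (Finset.range (p+1)) 0 (fun _ => (1 : Matrix (Fin 2) (Fin 2) (ZMod (p^2)))),
    Finset.sum_ite_eq' (Finset.range (p+1)) 1 (fun _ => (p : ZMod (p^2)) • M)]
  rw [if_pos (Finset.mem_range.mpr (by omega)), if_pos (Finset.mem_range.mpr (by omega))]

lemma map_explicit (a b c d : ZMod (p^2)) :
    (!![a, b; c, d]).map (red p) = !![red p a, red p b; red p c, red p d] := by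
  ext i j
  fin_cases i <;> fin_cases j <;> simp [Matrix.map_apply]

end basic

def unipUnit {p : ℕ} (n : Matrix (Fin 2) (Fin 2) (ZMod p)) (hsq : n * n = 0) : GL2 p where
  val := 1 + n
  inv := 1 - n
  val_inv := by rw [add_mul, one_mul, mul_sub, mul_one, hsq, sub_zero]; abel
  inv_val := by rw [sub_mul, one_mul, mul_add, mul_one, hsq, add_zero]; abel

section withH
variable {p : ℕ} [Fact p.Prime] (hp3 : 3 < p) (H : Subgroup (GL2 (p^2)))
  (hSL : ∀ M : GL2 p,
      M ∈ H.map (phi p) ↔ (↑M : Matrix (Fin 2) (Fin 2) (ZMod p)).det = 1)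

include hp3 hSL in
lemma unip_mem (N : Matrix (Fin 2) (Fin 2) (ZMod (p^2)))
    (hdet : (1 + N.map (red p)).det = 1)
    (hsq : N.map (red p) * N.map (red p) = 0) :
    kerUnit N ∈ H := by
  obtain ⟨x, hxH, hx⟩ : ∃ x ∈ H, phi p x = unipUnit (N.map (red p)) hsq := by
    simpa [Subgroup.mem_map] using (hSL (unipUnit (N.map (red p)) hsq)).mpr hdet
  set M : Matrix (Fin 2) (Fin 2) (ZMod (p^2)) := (↑x : Matrix (Fin 2) (Fin 2) (ZMod (p^2))) - 1 with hM
  have hmapM : M.map (red p) = N.map (red p) := by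
    have hcoe : (↑x : Matrix (Fin 2) (Fin 2) (ZMod (p^2))).map (red p) = 1 + N.map (red p) := by
      rw [← phi_coe, hx]; rfl
    ext i j
    have h2 := congrFun (congrFun hcoe i) j
    simp only [Matrix.map_apply, Matrix.add_apply] at h2
    simp only [hM, Matrix.map_apply, Matrix.sub_apply, map_sub, h2]
    rcases eq_or_ne i j with rfl | hij
    · simp [Matrix.one_apply_eq]
    · simp [Matrix.one_apply_ne hij]
  obtain ⟨E, hE⟩ := exists_matrix_lift (M * M) (by rw [Matrix.map_mul, hmapM, hsq])
  have hxp : x ^ p = kerUnit M := by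
    apply Units.ext
    rw [Units.val_pow_eq_pow_val]
    show (↑x : Matrix (Fin 2) (Fin 2) (ZMod (p^2))) ^ p = 1 + (p : ZMod (p^2)) • M
    have h1M : (↑x : Matrix (Fin 2) (Fin 2) (ZMod (p^2))) = 1 + M := by rw [hM]; abel
    rw [h1M, pow_p hp3 M E hE]
  have hNe : kerUnit N = x ^ p := by rw [hxp]; exact (kerUnit_congr hmapM).symm
  rw [hNe]
  exact pow_mem hxH p

include hp3 hSL in
lemma elem_e_mem (b : ZMod (p^2)) : kerUnit !![0, b; 0, 0] ∈ H := by
  apply unip_mem hp3 H hSL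
  · rw [map_explicit]
    simp [Matrix.det_fin_two, Matrix.add_apply, Matrix.one_apply]
  · rw [map_explicit]
    ext i j
    fin_cases i <;> fin_cases j <;> simp [Matrix.mul_apply, Fin.sum_univ_succ]

include hp3 hSL in
lemma elem_f_mem (c : ZMod (p^2)) : kerUnit !![0, 0; c, 0] ∈ H := by
  apply unip_mem hp3 H hSL
  · rw [map_explicit]
    simp [Matrix.det_fin_two, Matrix.add_apply, Matrix.one_apply]
  · rw [map_explicit]
    ext i j
    fin_cases i <;> fin_cases j <;> simp [Matrix.mul_apply, Fin.sum_univ_succ]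

include hp3 hSL in
lemma elem_n_mem (a : ZMod (p^2)) : kerUnit !![a, a; -a, -a] ∈ H := by
  apply unip_mem hp3 H hSL
  · rw [map_explicit]
    simp only [Matrix.det_fin_two, Matrix.add_apply, Matrix.one_apply]
    simp [map_neg]
    ring
  · rw [map_explicit]
    ext i j
    fin_cases i <;> fin_cases j <;>
      simp [Matrix.mul_apply, Fin.sum_univ_succ, map_neg] <;> ring

include hp3 hSL in
lemma traceZero_mem (A : Matrix (Fin 2) (Fin 2) (ZMod (p^2)))
    (htr : red p A.trace = 0) : kerUnit A ∈ H := by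
  have h00 : red p (A 1 1) = red p (- A 0 0) := by
    rw [Matrix.trace_fin_two, map_add] at htr
    rw [map_neg]
    linear_combination htr
  have hA : kerUnit A = kerUnit !![A 0 0, A 0 1; A 1 0, -(A 0 0)] := by
    apply kerUnit_congr
    ext i j
    fin_cases i <;> fin_cases j <;> simp [Matrix.map_apply, map_neg]
    linear_combination h00 - congrArg Neg.neg (map_neg (red p) (A 0 0))
  rw [hA]
  have hsplit : !![A 0 0, A 0 1; A 1 0, -(A 0 0)] =
      !![0, A 0 1 - A 0 0; 0, 0] + (!![0, 0; A 1 0 + A 0 0, 0] + !![A 0 0, A 0 0; -(A 0 0), -(A 0 0)]) := by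
    ext i j
    fin_cases i <;> fin_cases j <;> simp <;> ring
  rw [hsplit, ← kerUnit_mul, ← kerUnit_mul]
  exact mul_mem (elem_e_mem hp3 H hSL _)
    (mul_mem (elem_f_mem hp3 H hSL _) (elem_n_mem hp3 H hSL _))

end withH

section units
variable {p : ℕ} [Fact p.Prime]

def upU (c : ZMod p) : GL2 p where
  val := !![1, c; 0, 1]
  inv := !![1, -c; 0, 1]
  val_inv := by
    ext i j
    fin_cases i <;> fin_cases j <;>
      simp [Matrix.mul_apply, Fin.sum_univ_succ, Matrix.one_apply]
  inv_val := by
    ext i j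
    fin_cases i <;> fin_cases j <;>
      simp [Matrix.mul_apply, Fin.sum_univ_succ, Matrix.one_apply]

def loU (c : ZMod p) : GL2 p where
  val := !![1, 0; c, 1]
  inv := !![1, 0; -c, 1]
  val_inv := by
    ext i j
    fin_cases i <;> fin_cases j <;>
      simp [Matrix.mul_apply, Fin.sum_univ_succ, Matrix.one_apply]
  inv_val := by
    ext i j
    fin_cases i <;> fin_cases j <;>
      simp [Matrix.mul_apply, Fin.sum_univ_succ, Matrix.one_apply]

def dU (a : ZMod p) (ha : a ≠ 0) : GL2 p where
  val := !![a, 0; 0, a⁻¹]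
  inv := !![a⁻¹, 0; 0, a]
  val_inv := by
    ext i j
    fin_cases i <;> fin_cases j <;>
      simp [Matrix.mul_apply, Fin.sum_univ_succ, Matrix.one_apply,
        mul_inv_cancel₀ ha, inv_mul_cancel₀ ha]
  inv_val := by
    ext i j
    fin_cases i <;> fin_cases j <;>
      simp [Matrix.mul_apply, Fin.sum_univ_succ, Matrix.one_apply,
        mul_inv_cancel₀ ha, inv_mul_cancel₀ ha]

lemma det_upU (c : ZMod p) : (↑(upU c) : Matrix (Fin 2) (Fin 2) (ZMod p)).det = 1 := by
  show (!![1, c; 0, 1]).det = 1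
  simp [Matrix.det_fin_two]

lemma det_loU (c : ZMod p) : (↑(loU c) : Matrix (Fin 2) (Fin 2) (ZMod p)).det = 1 := by
  show (!![1, 0; c, 1]).det = 1
  simp [Matrix.det_fin_two]

lemma det_dU (a : ZMod p) (ha : a ≠ 0) :
    (↑(dU a ha) : Matrix (Fin 2) (Fin 2) (ZMod p)).det = 1 := by
  show (!![a, 0; 0, a⁻¹]).det = 1
  simp [Matrix.det_fin_two, mul_inv_cancel₀ ha]

end units

section chi
variable {p : ℕ} [Fact p.Prime]

def Qd (H : Subgroup (GL2 (p^2))) (u : GL2 p) : Prop :=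
  ∀ h ∈ H, phi p h = u → (↑h : Matrix (Fin 2) (Fin 2) (ZMod (p^2))).det = 1

variable (hp3 : 3 < p) (H : Subgroup (GL2 (p^2)))
  (hSL : ∀ M : GL2 p,
      M ∈ H.map (phi p) ↔ (↑M : Matrix (Fin 2) (Fin 2) (ZMod p)).det = 1)
  (hc : ∀ g ∈ H, phi p g = 1 → (↑g : Matrix (Fin 2) (Fin 2) (ZMod (p^2))).det = 1)

lemma det_val_inv (x : GL2 (p^2)) :
    (↑x : Matrix (Fin 2) (Fin 2) (ZMod (p^2))).det *
      (↑(x⁻¹) : Matrix (Fin 2) (Fin 2) (ZMod (p^2))).det = 1 := by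
  rw [← Matrix.det_mul, ← Units.val_mul, mul_inv_cancel, Units.val_one, Matrix.det_one]

lemma Q_mul {u v : GL2 p} (hu : Qd H u) (hv : Qd H v) (hum : u ∈ H.map (phi p)) :
    Qd H (u * v) := by
  intro h hh hphi
  obtain ⟨x, hx, hxu⟩ := hum
  have hk : x⁻¹ * h ∈ H := mul_mem (inv_mem hx) hh
  have hphik : phi p (x⁻¹ * h) = v := by
    rw [_root_.map_mul, map_inv, hxu, hphi, inv_mul_cancel_left]
  have h1 := hu x hx hxu
  have h2 := hv _ hk hphik
  have hrew : h = x * (x⁻¹ * h) := by group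
  rw [hrew, Units.val_mul, Matrix.det_mul, h1, h2, one_mul]

include hc in
lemma Q_one : Qd H 1 := by
  intro h hh hphi
  exact hc h hh hphi

include hc in
lemma Q_comm (a b : GL2 p) (ha : a ∈ H.map (phi p)) (hb : b ∈ H.map (phi p)) :
    Qd H (a * b * a⁻¹ * b⁻¹) := by
  intro h hh hphi
  obtain ⟨x, hx, hxa⟩ := ha
  obtain ⟨y, hy, hyb⟩ := hb
  set k := x * y * x⁻¹ * y⁻¹ with hk
  have hkH : k ∈ H := mul_mem (mul_mem (mul_mem hx hy) (inv_mem hx)) (inv_mem hy)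
  have hphik : phi p k = a * b * a⁻¹ * b⁻¹ := by
    rw [hk, _root_.map_mul, _root_.map_mul, _root_.map_mul, map_inv, map_inv, hxa, hyb]
  have hdetk : (↑k : Matrix (Fin 2) (Fin 2) (ZMod (p^2))).det = 1 := by
    have h1 := det_val_inv x
    have h2 := det_val_inv y
    have hsplit : (↑k : Matrix (Fin 2) (Fin 2) (ZMod (p^2))).det =
        (↑x : Matrix (Fin 2) (Fin 2) (ZMod (p^2))).det *
        (↑y : Matrix (Fin 2) (Fin 2) (ZMod (p^2))).det *
        (↑(x⁻¹) : Matrix (Fin 2) (Fin 2) (ZMod (p^2))).det *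
        (↑(y⁻¹) : Matrix (Fin 2) (Fin 2) (ZMod (p^2))).det := by
      rw [hk, Units.val_mul, Units.val_mul, Units.val_mul, Matrix.det_mul,
        Matrix.det_mul, Matrix.det_mul]
    rw [hsplit]
    linear_combination ((↑y : Matrix (Fin 2) (Fin 2) (ZMod (p^2))).det *
      (↑(y⁻¹) : Matrix (Fin 2) (Fin 2) (ZMod (p^2))).det) * h1 + h2
  have hker : phi p (h * k⁻¹) = 1 := by
    rw [_root_.map_mul, map_inv, hphi, hphik, mul_inv_cancel]
  have hdhk := hc _ (mul_mem hh (inv_mem hkH)) hker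
  have hrew : h = (h * k⁻¹) * k := by group
  rw [hrew, Units.val_mul, Matrix.det_mul, hdhk, hdetk, one_mul]

lemma two_ne (hp3 : 3 < p) : (2 : ZMod p) ≠ 0 := by
  intro h
  have h2 : ((2:ℕ) : ZMod p) = 0 := by exact_mod_cast h
  rw [ZMod.natCast_eq_zero_iff] at h2
  exact absurd (Nat.le_of_dvd (by norm_num) h2) (by omega)

lemma three_ne (hp3 : 3 < p) : (3 : ZMod p) ≠ 0 := by
  intro h
  have h2 : ((3:ℕ) : ZMod p) = 0 := by exact_mod_cast h
  rw [ZMod.natCast_eq_zero_iff] at h2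
  exact absurd (Nat.le_of_dvd (by norm_num) h2) (by omega)

include hp3 hSL hc in
lemma Q_upU (c : ZMod p) : Qd H (upU c) := by
  have h2 := two_ne hp3
  have h3 := three_ne hp3
  have hid : upU c = dU 2 h2 * upU (c * (3:ZMod p)⁻¹) * (dU 2 h2)⁻¹ * (upU (c * (3:ZMod p)⁻¹))⁻¹ := by
    apply Units.ext
    show (!![1, c; 0, 1] : Matrix (Fin 2) (Fin 2) (ZMod p)) =
      !![2, 0; 0, (2:ZMod p)⁻¹] * !![1, c * (3:ZMod p)⁻¹; 0, 1] * !![(2:ZMod p)⁻¹, 0; 0, 2] *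
        !![1, -(c * (3:ZMod p)⁻¹); 0, 1]
    ext i j
    fin_cases i <;> fin_cases j <;>
      simp [Matrix.mul_apply, Fin.sum_univ_succ] <;> field_simp <;> ring
  rw [hid]
  exact Q_comm H hc _ _ ((hSL _).mpr (det_dU 2 h2)) ((hSL _).mpr (det_upU _))

include hp3 hSL hc in
lemma Q_loU (c : ZMod p) : Qd H (loU c) := by
  have h2 := two_ne hp3
  have h3 := three_ne hp3
  have hid : loU c = dU 2 h2 * loU (-(4 * c * (3:ZMod p)⁻¹)) * (dU 2 h2)⁻¹ *
      (loU (-(4 * c * (3:ZMod p)⁻¹)))⁻¹ := by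
    apply Units.ext
    show (!![1, 0; c, 1] : Matrix (Fin 2) (Fin 2) (ZMod p)) =
      !![2, 0; 0, (2:ZMod p)⁻¹] * !![1, 0; -(4 * c * (3:ZMod p)⁻¹), 1] * !![(2:ZMod p)⁻¹, 0; 0, 2] *
        !![1, 0; -(-(4 * c * (3:ZMod p)⁻¹)), 1]
    ext i j
    fin_cases i <;> fin_cases j <;>
      simp [Matrix.mul_apply, Fin.sum_univ_succ] <;> field_simp <;> ring
  rw [hid]
  exact Q_comm H hc _ _ ((hSL _).mpr (det_dU 2 h2)) ((hSL _).mpr (det_loU _))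

def wU (b : ZMod p) (hb : b ≠ 0) : GL2 p where
  val := !![0, b; -b⁻¹, 0]
  inv := !![0, -b; b⁻¹, 0]
  val_inv := by
    ext i j
    fin_cases i <;> fin_cases j <;>
      simp [Matrix.mul_apply, Fin.sum_univ_succ, Matrix.one_apply,
        mul_inv_cancel₀ hb, inv_mul_cancel₀ hb]
  inv_val := by
    ext i j
    fin_cases i <;> fin_cases j <;>
      simp [Matrix.mul_apply, Fin.sum_univ_succ, Matrix.one_apply,
        mul_inv_cancel₀ hb, inv_mul_cancel₀ hb]

lemma det_wU (b : ZMod p) (hb : b ≠ 0) :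
    (↑(wU b hb) : Matrix (Fin 2) (Fin 2) (ZMod p)).det = 1 := by
  show (!![0, b; -b⁻¹, 0]).det = 1
  simp [Matrix.det_fin_two, mul_inv_cancel₀ hb]

include hp3 hSL hc in
lemma Q_wU (b : ZMod p) (hb : b ≠ 0) : Qd H (wU b hb) := by
  have hid : wU b hb = upU b * loU (-b⁻¹) * upU b := by
    apply Units.ext
    show (!![0, b; -b⁻¹, 0] : Matrix (Fin 2) (Fin 2) (ZMod p)) =
      !![1, b; 0, 1] * !![1, 0; -b⁻¹, 1] * !![1, b; 0, 1]
    ext i j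
    fin_cases i <;> fin_cases j <;>
      simp [Matrix.mul_apply, Fin.sum_univ_succ, hb]
  rw [hid]
  refine Q_mul H ?_ (Q_upU hp3 H hSL hc b) ?_
  · exact Q_mul H (Q_upU hp3 H hSL hc b) (Q_loU hp3 H hSL hc _) ((hSL _).mpr (det_upU _))
  · exact mul_mem ((hSL _).mpr (det_upU _)) ((hSL _).mpr (det_loU _))

def QM (H : Subgroup (GL2 (p^2))) (A : Matrix (Fin 2) (Fin 2) (ZMod p)) : Prop :=
  ∀ u : GL2 p, (↑u : Matrix (Fin 2) (Fin 2) (ZMod p)) = A → Qd H u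

include hp3 hSL hc in
lemma QM_diag (D : Fin 2 → ZMod p) (hD : D 0 * D 1 = 1) : QM H (Matrix.diagonal D) := by
  have h0 : D 0 ≠ 0 := by
    intro h
    rw [h, zero_mul] at hD
    exact zero_ne_one hD
  have h1 : D 1 = (D 0)⁻¹ := by
    field_simp
    linear_combination hD
  have hval : (↑(dU (D 0) h0) : Matrix (Fin 2) (Fin 2) (ZMod p)) = Matrix.diagonal D := by
    show !![D 0, 0; 0, (D 0)⁻¹] = Matrix.diagonal D
    ext i j
    fin_cases i <;> fin_cases j <;> simp [Matrix.diagonal, h1]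
  intro u hu
  have hu' : u = dU (D 0) h0 := Units.ext (by rw [hu, hval])
  have hone : (-1 : ZMod p) ≠ 0 := by
    simp only [ne_eq, neg_eq_zero]
    exact one_ne_zero
  have hid : dU (D 0) h0 = wU (D 0) h0 * wU (-1) hone := by
    apply Units.ext
    show (!![D 0, 0; 0, (D 0)⁻¹] : Matrix (Fin 2) (Fin 2) (ZMod p)) =
      !![0, D 0; -(D 0)⁻¹, 0] * !![0, -1; -(-1 : ZMod p)⁻¹, 0]
    ext i j
    fin_cases i <;> fin_cases j <;>
      simp [Matrix.mul_apply, Fin.sum_univ_succ] <;> field_simp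
  rw [hu', hid]
  exact Q_mul H (Q_wU hp3 H hSL hc _ _) (Q_wU hp3 H hSL hc _ _) ((hSL _).mpr (det_wU _ _))

include hp3 hSL hc in
lemma QM_transvection (t : Matrix.TransvectionStruct (Fin 2) (ZMod p)) :
    QM H t.toMatrix := by
  rcases t with ⟨i, j, hij, c⟩
  fin_cases i <;> fin_cases j
  · simp at hij
  · -- (0,1) : upper
    intro u hu
    have hval : (↑(upU c) : Matrix (Fin 2) (Fin 2) (ZMod p)) = Matrix.TransvectionStruct.toMatrix ⟨0, 1, hij, c⟩ := by
      show !![1, c; 0, 1] = Matrix.transvection (0 : Fin 2) 1 c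
      ext a b
      fin_cases a <;> fin_cases b <;>
        simp [Matrix.transvection, Matrix.single, Matrix.one_apply]
    have hu' : u = upU c := Units.ext (hu.trans hval.symm)
    rw [hu']
    exact Q_upU hp3 H hSL hc c
  · -- (1,0) : lower
    intro u hu
    have hval : (↑(loU c) : Matrix (Fin 2) (Fin 2) (ZMod p)) = Matrix.TransvectionStruct.toMatrix ⟨1, 0, hij, c⟩ := by
      show !![1, 0; c, 1] = Matrix.transvection (1 : Fin 2) 0 c
      ext a b
      fin_cases a <;> fin_cases b <;>
        simp [Matrix.transvection, Matrix.single, Matrix.one_apply]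
    have hu' : u = loU c := Units.ext (hu.trans hval.symm)
    rw [hu']
    exact Q_loU hp3 H hSL hc c
  · simp at hij

include hp3 hSL hc in
lemma QM_mul {A B : Matrix (Fin 2) (Fin 2) (ZMod p)} (hA : QM H A) (hB : QM H B)
    (hdA : A.det = 1) (hdB : B.det = 1) : QM H (A * B) := by
  intro u hu
  have hdA' : A.det ≠ 0 := by rw [hdA]; exact one_ne_zero
  have hdB' : B.det ≠ 0 := by rw [hdB]; exact one_ne_zero
  set uA := Matrix.GeneralLinearGroup.mkOfDetNeZero A hdA' with huA
  set uB := Matrix.GeneralLinearGroup.mkOfDetNeZero B hdB' with huB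
  have hvA : (↑uA : Matrix (Fin 2) (Fin 2) (ZMod p)) = A := rfl
  have hvB : (↑uB : Matrix (Fin 2) (Fin 2) (ZMod p)) = B := rfl
  have hu' : u = uA * uB := Units.ext (by rw [hu, Units.val_mul, hvA, hvB])
  rw [hu']
  exact Q_mul H (hA uA hvA) (hB uB hvB) ((hSL uA).mpr (by rw [hvA]; exact hdA))

include hc in
lemma QM_one : QM H (1 : Matrix (Fin 2) (Fin 2) (ZMod p)) := by
  intro u hu
  have hu' : u = 1 := Units.ext (by rw [hu]; rfl)
  rw [hu']
  exact Q_one H hc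

include hp3 hSL hc in
lemma QM_list (L : List (Matrix.TransvectionStruct (Fin 2) (ZMod p))) :
    QM H (L.map Matrix.TransvectionStruct.toMatrix).prod := by
  induction L with
  | nil => simpa using QM_one H hc
  | cons t L ih =>
      rw [List.map_cons, List.prod_cons]
      exact QM_mul hp3 H hSL hc (QM_transvection hp3 H hSL hc t) ih
        (Matrix.TransvectionStruct.det t) (Matrix.TransvectionStruct.det_toMatrix_prod L)

include hp3 hSL hc in
lemma detH_one : ∀ h ∈ H, (↑h : Matrix (Fin 2) (Fin 2) (ZMod (p^2))).det = 1 := by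
  intro h hh
  have hdet : (↑(phi p h) : Matrix (Fin 2) (Fin 2) (ZMod p)).det = 1 :=
    (hSL _).mp (Subgroup.mem_map_of_mem _ hh)
  obtain ⟨L, L', D, hdecomp⟩ :=
    Matrix.Pivot.exists_list_transvec_mul_diagonal_mul_list_transvec
      (↑(phi p h) : Matrix (Fin 2) (Fin 2) (ZMod p))
  have hdetD : D 0 * D 1 = 1 := by
    have h1 : (Matrix.diagonal D).det = D 0 * D 1 := by
      rw [Matrix.det_diagonal, Fin.prod_univ_two]
    have h2 := hdet
    rw [hdecomp, Matrix.det_mul, Matrix.det_mul, Matrix.TransvectionStruct.det_toMatrix_prod,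
      Matrix.TransvectionStruct.det_toMatrix_prod, one_mul, mul_one, h1] at h2
    exact h2
  have hQ : Qd H (phi p h) := by
    refine QM_mul hp3 H hSL hc ?_ (QM_list hp3 H hSL hc L') ?_ (Matrix.TransvectionStruct.det_toMatrix_prod L')
      (phi p h) hdecomp
    · exact QM_mul hp3 H hSL hc (QM_list hp3 H hSL hc L) (QM_diag hp3 H hSL hc D hdetD)
        (Matrix.TransvectionStruct.det_toMatrix_prod L) (by rw [Matrix.det_diagonal, Fin.prod_univ_two]; exact hdetD)
    · rw [Matrix.det_mul, Matrix.TransvectionStruct.det_toMatrix_prod, Matrix.det_diagonal, Fin.prod_univ_two,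
        one_mul]
      exact hdetD
  exact hQ h hh rfl

end chi

section final
variable {p : ℕ} [Fact p.Prime]

lemma red_eq_zero_of_pmul (x : ZMod (p^2)) (h : (p : ZMod (p^2)) * x = 0) : red p x = 0 := by
  have hp0 : p ≠ 0 := (Fact.out (p := p.Prime)).ne_zero
  obtain ⟨n, rfl⟩ : ∃ n : ℕ, x = (n : ZMod (p^2)) := ⟨x.val, (ZMod.natCast_zmod_val x).symm⟩
  rw [← Nat.cast_mul, ZMod.natCast_eq_zero_iff, pow_two] at h
  rw [map_natCast, ZMod.natCast_eq_zero_iff]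
  exact (mul_dvd_mul_iff_left hp0).mp h

lemma fullker (hp3 : 3 < p) (H : Subgroup (GL2 (p^2)))
    (hSL : ∀ M : GL2 p,
      M ∈ H.map (phi p) ↔ (↑M : Matrix (Fin 2) (Fin 2) (ZMod p)).det = 1)
    (A₀ : Matrix (Fin 2) (Fin 2) (ZMod (p^2))) (hA₀ : kerUnit A₀ ∈ H)
    (ht : red p A₀.trace ≠ 0) :
    ∀ B : Matrix (Fin 2) (Fin 2) (ZMod (p^2)), kerUnit B ∈ H := by
  haveI : NeZero p := ⟨(Fact.out (p := p.Prime)).ne_zero⟩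
  intro B
  set t := red p A₀.trace with htdef
  set s : ZMod p := red p B.trace * t⁻¹ with hs
  set m := s.val with hmdef
  have hm : ((m : ℕ) : ZMod p) = s := ZMod.natCast_zmod_val s
  have h1 : kerUnit (B - m • A₀) ∈ H := by
    apply traceZero_mem hp3 H hSL
    have htr : (B - m • A₀).trace = B.trace - m • A₀.trace := by
      rw [Matrix.trace_sub, Matrix.trace_smul]
    rw [htr, map_sub, map_nsmul, nsmul_eq_mul, hm, hs]
    field_simp
    rw [← htdef, sub_self, mul_zero, mul_zero]
  have h2 : kerUnit (m • A₀) ∈ H := by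
    rw [← kerUnit_pow]
    exact pow_mem hA₀ m
  have h3 : kerUnit B = kerUnit (B - m • A₀) * kerUnit (m • A₀) := by
    rw [kerUnit_mul]
    congr 1
    abel
  rw [h3]
  exact mul_mem h1 h2

theorem eq_SL_or_preimage_SL' (hp3 : 3 < p)
    (H : Subgroup (GL2 (p^2)))
    (hSL : ∀ M : GL2 p,
      M ∈ H.map (phi p) ↔ (↑M : Matrix (Fin 2) (Fin 2) (ZMod p)).det = 1) :
    (∀ g : GL2 (p^2), g ∈ H ↔ (↑g : Matrix (Fin 2) (Fin 2) (ZMod (p^2))).det = 1) ∨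
    (∀ g : GL2 (p^2), g ∈ H ↔
      (↑(phi p g) : Matrix (Fin 2) (Fin 2) (ZMod p)).det = 1) := by
  by_cases hc : ∀ g ∈ H, phi p g = 1 → (↑g : Matrix (Fin 2) (Fin 2) (ZMod (p^2))).det = 1
  · left
    intro g
    constructor
    · intro hg
      exact detH_one hp3 H hSL hc g hg
    · intro hdet
      have hdet' : (↑(phi p g) : Matrix (Fin 2) (Fin 2) (ZMod p)).det = 1 := by
        have hmd := RingHom.map_det (red p) (↑g : Matrix (Fin 2) (Fin 2) (ZMod (p^2)))
        rw [RingHom.mapMatrix_apply] at hmd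
        rw [phi_coe, ← hmd, hdet, _root_.map_one]
      obtain ⟨h, hh, hph⟩ := (hSL (phi p g)).mpr hdet'
      have hker : phi p (g * h⁻¹) = 1 := by
        rw [_root_.map_mul, map_inv, hph, mul_inv_cancel]
      obtain ⟨A, hA⟩ := mem_ker_iff hker
      have hdeth : (↑h : Matrix (Fin 2) (Fin 2) (ZMod (p^2))).det = 1 :=
        detH_one hp3 H hSL hc h hh
      have hdethinv : (↑(h⁻¹) : Matrix (Fin 2) (Fin 2) (ZMod (p^2))).det = 1 := by
        have h4 := det_val_inv h
        rw [hdeth, one_mul] at h4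
        exact h4
      have hdetk : (↑(g * h⁻¹) : Matrix (Fin 2) (Fin 2) (ZMod (p^2))).det = 1 := by
        rw [Units.val_mul, Matrix.det_mul, hdet, hdethinv, one_mul]
      rw [hA, det_kerUnit] at hdetk
      have hptr : (p : ZMod (p^2)) * A.trace = 0 := by linear_combination hdetk
      have htr := red_eq_zero_of_pmul _ hptr
      have hkH : kerUnit A ∈ H := traceZero_mem hp3 H hSL A htr
      have hrew : g = (g * h⁻¹) * h := by group
      rw [hrew, hA]
      exact mul_mem hkH hh
  · right
    push_neg at hc
    obtain ⟨g₀, hg₀H, hg₀ker, hg₀det⟩ := hc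
    obtain ⟨A₀, hA₀⟩ := mem_ker_iff hg₀ker
    have ht : red p A₀.trace ≠ 0 := by
      intro h0
      apply hg₀det
      rw [hA₀, det_kerUnit]
      have hz : (p : ZMod (p^2)) * A₀.trace = (p : ZMod (p^2)) * 0 :=
        pmul_eq_of_red_eq (by rw [h0, map_zero])
      rw [mul_zero] at hz
      rw [hz, add_zero]
    have hfull := fullker hp3 H hSL A₀ (hA₀ ▸ hg₀H) ht
    intro g
    constructor
    · intro hg
      exact (hSL (phi p g)).mp (Subgroup.mem_map_of_mem _ hg)
    · intro hdet
      obtain ⟨h, hh, hph⟩ := (hSL (phi p g)).mpr hdet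
      have hker : phi p (g * h⁻¹) = 1 := by
        rw [_root_.map_mul, map_inv, hph, mul_inv_cancel]
      obtain ⟨A, hA⟩ := mem_ker_iff hker
      have hrew : g = (g * h⁻¹) * h := by group
      rw [hrew, hA]
      exact mul_mem (hfull A) hh

end final

end aux

/-- Let `p > 3` be prime and `H ≤ GL₂(ℤ/p²ℤ)` with `φ(H)` exactly the
set of determinant-`1` elements of `GL₂(ℤ/pℤ)`. Then `H = SL₂(ℤ/p²ℤ)` or
`H = φ⁻¹(SL₂(ℤ/pℤ))`. -/
theorem eq_SL_or_preimage_SL {p : ℕ} [Fact p.Prime] (hp3 : 3 < p)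
    (H : Subgroup (GL2 (p^2)))
    (hSL : ∀ M : GL2 p,
      M ∈ H.map (phi p) ↔ (↑M : Matrix (Fin 2) (Fin 2) (ZMod p)).det = 1) :
    (∀ g : GL2 (p^2), g ∈ H ↔ (↑g : Matrix (Fin 2) (Fin 2) (ZMod (p^2))).det = 1) ∨
    (∀ g : GL2 (p^2), g ∈ H ↔
      (↑(phi p g) : Matrix (Fin 2) (Fin 2) (ZMod p)).det = 1) := by
  exact eq_SL_or_preimage_SL' hp3 H hSL
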